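/- Let B be the signed incidence matrix of a directed multigraph G, let P be the Moore–Penrose pseudoinverse of Bᵀ, and let M be the Moore–Penrose pseudoinverse of the graph Laplacian L = B Bᵀ. Let γ be the product over E of standard real Gaussian measures on ℝ^E. Then the vertex coordinates x = P y of a Gaussian random embedding have covariance matrix L⁺: for all vertices i, j ∈ V, ∫ (P y)_i (P y)_j dγ(y) = M_{ij}. -/

import Mathlib

open Matrix

/-- The signed incidence matrix of the directed multigraph on vertex set `V` with
edge set `E` given by maps `head tail : E → V`. -/
noncomputable def incidenceMatrix {V E : Type*} [DecidableEq V]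
    (head tail : E → V) : Matrix V E ℝ := fun i e =>
  if head e = tail e then 0
  else if i = head e then 1
  else if i = tail e then -1
  else 0

/-- The simple graph underlying the directed multigraph given by `head, tail`:
`u` is adjacent to `v` iff `u ≠ v` and some edge `e` has `{head e, tail e} = {u, v}`. -/
def underlyingGraph {V E : Type*} (head tail : E → V) : SimpleGraph V where
  Adj u v := u ≠ v ∧ ∃ e, (head e = u ∧ tail e = v) ∨ (head e = v ∧ tail e = u)
  symm := by
    constructor
    rintro u v ⟨huv, e, he⟩
    exact ⟨huv.symm, e, he.symm⟩
  loopless := by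
    constructor
    rintro v ⟨hv, -⟩
    exact hv rfl

/-- `P` is the Moore–Penrose pseudoinverse of `A` if the four Moore–Penrose
conditions hold. -/
def IsMoorePenroseInverse {m n : Type*} [Fintype m] [Fintype n]
    (A : Matrix m n ℝ) (P : Matrix n m ℝ) : Prop :=
  A * P * A = A ∧ P * A * P = P ∧ (A * P)ᵀ = A * P ∧ (P * A)ᵀ = P * A

open MeasureTheory ProbabilityTheory

section Aux

variable {m n : Type*} [Fintype m] [Fintype n]

/-- The Moore–Penrose pseudoinverse is unique. -/
lemma aux_mp_unique (A : Matrix m n ℝ) (P Q : Matrix n m ℝ)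
    (hP : IsMoorePenroseInverse A P) (hQ : IsMoorePenroseInverse A Q) : P = Q := by
  obtain ⟨hP1, hP2, hP3, hP4⟩ := hP
  obtain ⟨hQ1, hQ2, hQ3, hQ4⟩ := hQ
  have hAP : A * P = A * Q := by
    calc A * P = (A * P)ᵀ := hP3.symm
    _ = Pᵀ * Aᵀ := transpose_mul _ _
    _ = Pᵀ * (A * Q * A)ᵀ := by rw [hQ1]
    _ = Pᵀ * (Aᵀ * (A * Q)ᵀ) := by rw [transpose_mul]
    _ = Pᵀ * (Aᵀ * (A * Q)) := by rw [hQ3]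
    _ = (Pᵀ * Aᵀ) * (A * Q) := by rw [Matrix.mul_assoc]
    _ = (A * P)ᵀ * (A * Q) := by rw [transpose_mul]
    _ = (A * P) * (A * Q) := by rw [hP3]
    _ = ((A * P) * A) * Q := by rw [Matrix.mul_assoc (A * P) A Q]
    _ = A * Q := by rw [hP1]
  have hPA : P * A = Q * A := by
    calc P * A = (P * A)ᵀ := hP4.symm
    _ = Aᵀ * Pᵀ := transpose_mul _ _
    _ = (A * Q * A)ᵀ * Pᵀ := by rw [hQ1]
    _ = (A * (Q * A))ᵀ * Pᵀ := by rw [Matrix.mul_assoc]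
    _ = ((Q * A)ᵀ * Aᵀ) * Pᵀ := by rw [transpose_mul]
    _ = (Q * A)ᵀ * (Aᵀ * Pᵀ) := by rw [Matrix.mul_assoc]
    _ = (Q * A)ᵀ * (P * A)ᵀ := by rw [← transpose_mul]
    _ = (Q * A) * (P * A) := by rw [hQ4, hP4]
    _ = Q * (A * P * A) := by rw [Matrix.mul_assoc Q A (P * A), ← Matrix.mul_assoc A P A]
    _ = Q * A := by rw [hP1]
  calc P = P * A * P := hP2.symm
  _ = Q * A * P := by rw [hPA]
  _ = Q * (A * P) := Matrix.mul_assoc _ _ _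
  _ = Q * (A * Q) := by rw [hAP]
  _ = Q * A * Q := (Matrix.mul_assoc _ _ _).symm
  _ = Q := hQ2

/-- If `P` is the pseudoinverse of `A`, then `P Pᵀ` is the pseudoinverse of `Aᵀ A`. -/
lemma aux_ppt (A : Matrix m n ℝ) (P : Matrix n m ℝ)
    (hp : IsMoorePenroseInverse A P) :
    IsMoorePenroseInverse (Aᵀ * A) (P * Pᵀ) := by
  obtain ⟨h1, h2, h3, h4⟩ := hp
  have key : Pᵀ * Aᵀ = A * P := (transpose_mul A P).symm.trans h3
  have key2 : Aᵀ * Pᵀ = P * A := (transpose_mul P A).symm.trans h4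
  have e1 : A * P * Pᵀ = Pᵀ := by
    calc A * P * Pᵀ = (A * P)ᵀᵀ * Pᵀ := by rw [transpose_transpose]
    _ = (P * (A * P)ᵀ)ᵀ := (transpose_mul _ _).symm
    _ = (P * (A * P))ᵀ := by rw [h3]
    _ = (P * A * P)ᵀ := by rw [Matrix.mul_assoc]
    _ = Pᵀ := by rw [h2]
  have e2 : P * Pᵀ * Aᵀ = P := by
    calc P * Pᵀ * Aᵀ = P * (Pᵀ * Aᵀ) := Matrix.mul_assoc _ _ _
    _ = P * (A * P) := by rw [key]
    _ = P * A * P := (Matrix.mul_assoc _ _ _).symm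
    _ = P := h2
  have hLN : (Aᵀ * A) * (P * Pᵀ) = P * A := by
    calc (Aᵀ * A) * (P * Pᵀ) = Aᵀ * (A * P * Pᵀ) := by
          rw [Matrix.mul_assoc, ← Matrix.mul_assoc A P Pᵀ]
    _ = Aᵀ * Pᵀ := by rw [e1]
    _ = P * A := key2
  have hNL : (P * Pᵀ) * (Aᵀ * A) = P * A := by
    calc (P * Pᵀ) * (Aᵀ * A) = (P * Pᵀ * Aᵀ) * A := by rw [← Matrix.mul_assoc]
    _ = P * A := by rw [e2]
  refine ⟨?_, ?_, ?_, ?_⟩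
  · calc (Aᵀ * A) * (P * Pᵀ) * (Aᵀ * A) = (P * A) * (Aᵀ * A) := by rw [hLN]
    _ = (Aᵀ * Pᵀ) * (Aᵀ * A) := by rw [key2]
    _ = Aᵀ * ((Pᵀ * Aᵀ) * A) := by rw [Matrix.mul_assoc, ← Matrix.mul_assoc Pᵀ Aᵀ A]
    _ = Aᵀ * (A * P * A) := by rw [key]
    _ = Aᵀ * A := by rw [h1]
  · calc (P * Pᵀ) * (Aᵀ * A) * (P * Pᵀ) = (P * A) * (P * Pᵀ) := by rw [hNL]
    _ = (P * A * P) * Pᵀ := by rw [← Matrix.mul_assoc]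
    _ = P * Pᵀ := by rw [h2]
  · rw [hLN]; exact h4
  · rw [hNL]; exact h4

open Real in
lemma aux_gauss_integral_eq (g : ℝ → ℝ) :
    ∫ x, g x ∂(gaussianReal 0 1) = ∫ x, gaussianPDFReal 0 1 x * g x := by
  rw [gaussianReal_of_var_ne_zero 0 one_ne_zero]
  have hmeas : Measurable fun x => (gaussianPDFReal 0 1 x).toNNReal :=
    (measurable_gaussianPDFReal 0 1).real_toNNReal
  rw [show (gaussianPDF 0 1) = fun x => ((gaussianPDFReal 0 1 x).toNNReal : ENNReal) from rfl]
  rw [integral_withDensity_eq_integral_smul hmeas]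
  congr 1
  funext x
  rw [NNReal.smul_def, Real.coe_toNNReal _ (gaussianPDFReal_nonneg 0 1 x), smul_eq_mul]

open Real in
lemma aux_gauss_integrable_iff (g : ℝ → ℝ) :
    Integrable g (gaussianReal 0 1) ↔
      Integrable (fun x => gaussianPDFReal 0 1 x * g x) volume := by
  rw [gaussianReal_of_var_ne_zero 0 one_ne_zero]
  have hmeas : Measurable fun x => (gaussianPDFReal 0 1 x).toNNReal :=
    (measurable_gaussianPDFReal 0 1).real_toNNReal
  rw [show (gaussianPDF 0 1) = fun x => ((gaussianPDFReal 0 1 x).toNNReal : ENNReal) from rfl]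
  rw [integrable_withDensity_iff_integrable_smul hmeas]
  rw [show (fun x => (gaussianPDFReal 0 1 x).toNNReal • g x)
      = fun x => gaussianPDFReal 0 1 x * g x by
    funext x
    rw [NNReal.smul_def, Real.coe_toNNReal _ (gaussianPDFReal_nonneg 0 1 x), smul_eq_mul]]

open Real in
lemma aux_pdf_eq :
    gaussianPDFReal 0 1 = fun x => (√(2 * π))⁻¹ * rexp (-(1/2) * x ^ 2) := by
  funext x
  rw [gaussianPDFReal_def]
  simp only [NNReal.coe_one, mul_one, sub_zero]
  congr 1
  ring_nf

open Real in
lemma aux_integrable_id : Integrable (fun x : ℝ => x) (gaussianReal 0 1) := by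
  rw [aux_gauss_integrable_iff, aux_pdf_eq]
  simp only [mul_assoc]
  have := (integrable_mul_exp_neg_mul_sq (b := 1/2) (by norm_num)).const_mul (√(2 * π))⁻¹
  apply this.congr
  filter_upwards with x
  ring

open Real in
lemma aux_integrable_sq : Integrable (fun x : ℝ => x * x) (gaussianReal 0 1) := by
  rw [aux_gauss_integrable_iff, aux_pdf_eq]
  have h2 : Integrable (fun x : ℝ => x ^ (2 : ℝ) * rexp (-(1/2) * x ^ 2)) :=
    integrable_rpow_mul_exp_neg_mul_sq (by norm_num) (by norm_num : (-1:ℝ) < 2)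
  have h2' : Integrable (fun x : ℝ => x ^ 2 * rexp (-(1/2) * x ^ 2)) := by
    apply h2.congr
    filter_upwards with x
    rw [← Real.rpow_natCast x 2]
    norm_num
  have := h2'.const_mul (√(2 * π))⁻¹
  apply this.congr
  filter_upwards with x
  ring

open Real in
lemma aux_mean : ∫ x, x ∂(gaussianReal 0 1) = 0 := by
  rw [aux_gauss_integral_eq, aux_pdf_eq]
  have : ∫ x : ℝ, (√(2 * π))⁻¹ * rexp (-(1/2) * x ^ 2) * x
      = (√(2 * π))⁻¹ * ∫ x : ℝ, x * rexp (-(1/2) * x ^ 2) := by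
    rw [← integral_const_mul]
    congr 1; funext x; ring
  rw [this]
  have hodd : ∫ x : ℝ, x * rexp (-(1/2) * x ^ 2) = 0 := by
    have h1 := integral_neg_eq_self (fun x : ℝ => x * rexp (-(1/2) * x ^ 2)) volume
    have h2 : (fun x : ℝ => (-x) * rexp (-(1/2) * (-x) ^ 2))
        = fun x : ℝ => -(x * rexp (-(1/2) * x ^ 2)) := by
      funext x; rw [neg_sq]; ring
    rw [h2, integral_neg] at h1
    linarith
  rw [hodd, mul_zero]

open Real in
lemma aux_second_moment : ∫ x, x * x ∂(gaussianReal 0 1) = 1 := by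
  rw [aux_gauss_integral_eq, aux_pdf_eq]
  have step1 : ∫ x : ℝ, (√(2 * π))⁻¹ * rexp (-(1/2) * x ^ 2) * (x * x)
      = (√(2 * π))⁻¹ * ∫ x : ℝ, x ^ 2 * rexp (-(1/2) * x ^ 2) := by
    rw [← integral_const_mul]
    congr 1; funext x; ring
  rw [step1]
  have habs : ∫ x : ℝ, x ^ 2 * rexp (-(1/2) * x ^ 2)
      = 2 * ∫ x in Set.Ioi (0:ℝ), x ^ 2 * rexp (-(1/2) * x ^ 2) := by
    rw [← integral_comp_abs (f := fun x => x ^ 2 * rexp (-(1/2) * x ^ 2))]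
    congr 1; funext x; rw [sq_abs]
  have hIoi : ∫ x in Set.Ioi (0:ℝ), x ^ 2 * rexp (-(1/2) * x ^ 2)
      = (1/2 : ℝ) ^ (-(3:ℝ)/2) * (1/2) * Real.Gamma (3/2) := by
    have := integral_rpow_mul_exp_neg_mul_rpow (p := 2) (q := 2) (b := 1/2)
      (by norm_num) (by norm_num) (by norm_num)
    rw [show ((2:ℝ) + 1) = 3 by norm_num] at this
    rw [← this]
    refine setIntegral_congr_fun measurableSet_Ioi (fun x hx => ?_)
    rw [← Real.rpow_natCast x 2]
    norm_num
  have hGamma : Real.Gamma (3/2) = (1/2) * √π := by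
    have h := Real.Gamma_add_one (s := 1/2) (by norm_num)
    rw [show (1/2 : ℝ) + 1 = 3/2 by norm_num] at h
    rw [h, Real.Gamma_one_half_eq]
  rw [habs, hIoi, hGamma]
  have hhalf : (1/2 : ℝ) ^ (-(3:ℝ)/2) = 2 * √2 := by
    rw [show (1/2 : ℝ) = 2⁻¹ by norm_num,
      Real.inv_rpow (by norm_num : (0:ℝ) ≤ 2), ← Real.rpow_neg (by norm_num : (0:ℝ) ≤ 2),
      show (-(-(3:ℝ)/2)) = 1 + 1/2 by norm_num,
      Real.rpow_add (by norm_num : (0:ℝ) < 2), Real.rpow_one, ← Real.sqrt_eq_rpow]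
  rw [hhalf]
  have h2pi : √(2 * π) = √2 * √π := Real.sqrt_mul (by norm_num) π
  have hs2 : (0:ℝ) < √2 := Real.sqrt_pos.mpr (by norm_num)
  have hspi : (0:ℝ) < √π := Real.sqrt_pos.mpr Real.pi_pos
  rw [h2pi]
  field_simp

lemma aux_pi_integrable_prod {ι : Type*} [Fintype ι] (f : ι → ℝ → ℝ)
    (hf : ∀ k, Integrable (f k) (gaussianReal 0 1)) :
    Integrable (fun y : ι → ℝ => ∏ k, f k (y k))
      (Measure.pi fun _ : ι => gaussianReal 0 1) := by
  letI : MeasureSpace ℝ := ⟨gaussianReal 0 1⟩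
  haveI : SigmaFinite (volume : Measure ℝ) :=
    (inferInstance : SigmaFinite (gaussianReal 0 1))
  exact Integrable.fintype_prod (f := f) hf

lemma aux_pi_integral_prod {ι : Type*} [Fintype ι] (f : ι → ℝ → ℝ) :
    ∫ y : ι → ℝ, ∏ k, f k (y k) ∂(Measure.pi fun _ : ι => gaussianReal 0 1)
      = ∏ k, ∫ x, f k x ∂(gaussianReal 0 1) := by
  letI : MeasureSpace ℝ := ⟨gaussianReal 0 1⟩
  haveI : SigmaFinite (volume : Measure ℝ) :=
    (inferInstance : SigmaFinite (gaussianReal 0 1))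
  exact MeasureTheory.integral_fintype_prod_eq_prod f

end Aux

/-- The vertex coordinates `x = P y` of a Gaussian random embedding, with `y` sampled
from the standard Gaussian product measure `γ` on `ℝ^E`, have covariance matrix the
Moore–Penrose pseudoinverse `M = L⁺` of the graph Laplacian `L = B Bᵀ`. -/
theorem vertex_covariance
    {V E : Type*} [Fintype V] [Fintype E] [DecidableEq V]
    (head tail : E → V)
    (B : Matrix V E ℝ) (hB : B = incidenceMatrix head tail)
    (P : Matrix V E ℝ) (hP : IsMoorePenroseInverse Bᵀ P)
    (M : Matrix V V ℝ) (hM : IsMoorePenroseInverse (B * Bᵀ) M)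
    (γ : Measure (E → ℝ)) (hγ : γ = Measure.pi fun _ : E => gaussianReal 0 1) :
    ∀ i j : V,
      ∫ y : E → ℝ, (P.mulVec y i) * (P.mulVec y j) ∂γ = M i j := by
  classical
  intro i j
  subst hγ
  have hMP : M = P * Pᵀ := by
    have h1 : IsMoorePenroseInverse ((Bᵀ)ᵀ * Bᵀ) (P * Pᵀ) := aux_ppt Bᵀ P hP
    rw [transpose_transpose] at h1
    exact aux_mp_unique (B * Bᵀ) M (P * Pᵀ) hM h1
  have hcoord : ∀ e f k : E,
      Integrable (fun x : ℝ => (if k = e then x else 1) * (if k = f then x else 1))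
        (gaussianReal 0 1) := by
    intro e f k
    by_cases h1 : k = e
    · subst h1
      by_cases h2 : k = f
      · subst h2
        simpa using aux_integrable_sq
      · simpa [h2] using aux_integrable_id
    · by_cases h2 : k = f
      · subst h2
        simpa [h1] using aux_integrable_id
      · simpa [h1, h2] using integrable_const (1 : ℝ)
  have hrw : ∀ e f : E, (fun y : E → ℝ => y e * y f)
      = fun y : E → ℝ => ∏ k, (if k = e then y k else 1) * (if k = f then y k else 1) := by
    intro e f
    funext y
    rw [Finset.prod_mul_distrib]
    simp [Finset.prod_ite_eq']
  have hint : ∀ e f : E, Integrable (fun y : E → ℝ => y e * y f)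
      (Measure.pi fun _ : E => gaussianReal 0 1) := by
    intro e f
    rw [hrw e f]
    exact aux_pi_integrable_prod _ (hcoord e f)
  have hval : ∀ e f : E,
      (∫ y : E → ℝ, y e * y f ∂(Measure.pi fun _ : E => gaussianReal 0 1))
        = if e = f then 1 else 0 := by
    intro e f
    have hpi : (∫ y : E → ℝ, ∏ k : E, (if k = e then y k else 1) * (if k = f then y k else 1)
          ∂(Measure.pi fun _ : E => gaussianReal 0 1))
        = ∏ k : E, ∫ x, (if k = e then x else 1) * (if k = f then x else 1)
          ∂(gaussianReal 0 1) :=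
      aux_pi_integral_prod fun k x => (if k = e then x else 1) * (if k = f then x else 1)
    rw [hrw e f, hpi]
    by_cases hef : e = f
    · subst hef
      rw [if_pos rfl]
      have hone : ∀ k : E,
          (∫ x, (if k = e then x else 1) * (if k = e then x else 1) ∂(gaussianReal 0 1)) = 1 := by
        intro k
        by_cases h1 : k = e
        · subst h1
          simpa using aux_second_moment
        · simp [h1]
      rw [Finset.prod_congr rfl (fun k _ => hone k), Finset.prod_const_one]
    · rw [if_neg hef]
      apply Finset.prod_eq_zero (Finset.mem_univ e)
      have hfn : (fun x : ℝ => (if e = e then x else 1) * (if e = f then x else 1))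
          = fun x : ℝ => x := by
        funext x
        rw [if_pos rfl, if_neg hef, mul_one]
      rw [hfn]
      exact aux_mean
  calc ∫ y : E → ℝ, (P.mulVec y i) * (P.mulVec y j)
        ∂(Measure.pi fun _ : E => gaussianReal 0 1)
      = ∫ y : E → ℝ, ∑ e : E, ∑ f : E, (P i e * P j f) * (y e * y f)
        ∂(Measure.pi fun _ : E => gaussianReal 0 1) := by
        congr 1
        funext y
        simp only [Matrix.mulVec, dotProduct]
        rw [Finset.sum_mul_sum]
        exact Finset.sum_congr rfl fun e _ =>
          Finset.sum_congr rfl fun f _ => mul_mul_mul_comm _ _ _ _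
    _ = ∑ e : E, ∑ f : E, (P i e * P j f) *
          ∫ y : E → ℝ, y e * y f ∂(Measure.pi fun _ : E => gaussianReal 0 1) := by
        rw [integral_finset_sum _
          (fun e _ => integrable_finset_sum _ (fun f _ => (hint e f).const_mul _))]
        refine Finset.sum_congr rfl fun e _ => ?_
        rw [integral_finset_sum _ (fun f _ => (hint e f).const_mul _)]
        exact Finset.sum_congr rfl fun f _ => integral_const_mul _ _
    _ = ∑ e : E, P i e * P j e := by
        refine Finset.sum_congr rfl fun e _ => ?_
        simp only [hval, mul_ite, mul_one, mul_zero]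
        simp [Finset.sum_ite_eq]
    _ = M i j := by
        rw [hMP, Matrix.mul_apply]
        simp [Matrix.transpose_apply]
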